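/- In the stretched diameter graph A_{k,P}, for every pair of vertices u, v that do not belong to L′ ∪ R′ ∪ ⋃_i Y(ℓ′_i, ℓ_i) ∪ ⋃_i Y(r′_i, r_i), one has d(u, v) ≤ 4P + 1. -/

import Mathlib

/-!
Statement 5: In the stretched diameter graph `A_{k,P}`, for every pair of
vertices `u, v` that do not belong to
`L′ ∪ R′ ∪ ⋃_i Y(ℓ′_i, ℓ_i) ∪ ⋃_i Y(r′_i, r_i)`, one has `d(u, v) ≤ 4P + 1`.
-/

/-- Generic graph built from "hub" vertices and "segments": each segment `s`
is a path with `len s` edges between the two hubs `ends s`, whose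
`len s - 1` internal vertices are the pairs `⟨s, t⟩`.  A segment of length 1
is just an edge between its two endpoints. -/
def segGraph {Hub Seg : Type} (ends : Seg → Hub × Hub) (len : Seg → ℕ) :
    SimpleGraph (Hub ⊕ (s : Seg) × Fin (len s - 1)) :=
  SimpleGraph.fromRel fun u v =>
    match u, v with
    | Sum.inl x, Sum.inl y => ∃ s, len s = 1 ∧ ends s = (x, y)
    | Sum.inl x, Sum.inr ⟨s, t⟩ =>
        ((ends s).1 = x ∧ (t : ℕ) = 0) ∨ ((ends s).2 = x ∧ (t : ℕ) + 2 = len s)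
    | Sum.inr ⟨s, t⟩, Sum.inl x =>
        ((ends s).1 = x ∧ (t : ℕ) = 0) ∨ ((ends s).2 = x ∧ (t : ℕ) + 2 = len s)
    | Sum.inr ⟨s, t⟩, Sum.inr ⟨s', t'⟩ =>
        s = s' ∧ ((t : ℕ) + 1 = (t' : ℕ) ∨ (t' : ℕ) + 1 = (t : ℕ))

section Generic
variable {Hub Seg : Type} {ends : Seg → Hub × Hub} {len : Seg → ℕ}

lemma segGraph_adj_fst (s : Seg) (t : Fin (len s - 1)) (ht : (t : ℕ) = 0) :
    (segGraph ends len).Adj (Sum.inr ⟨s, t⟩) (Sum.inl (ends s).1) := by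
  rw [segGraph, SimpleGraph.fromRel_adj]
  exact ⟨by simp, Or.inl (Or.inl ⟨rfl, ht⟩)⟩

lemma segGraph_adj_snd (s : Seg) (t : Fin (len s - 1)) (ht : (t : ℕ) + 2 = len s) :
    (segGraph ends len).Adj (Sum.inr ⟨s, t⟩) (Sum.inl (ends s).2) := by
  rw [segGraph, SimpleGraph.fromRel_adj]
  exact ⟨by simp, Or.inl (Or.inr ⟨rfl, ht⟩)⟩

lemma segGraph_adj_succ (s : Seg) (t t' : Fin (len s - 1)) (ht : (t : ℕ) + 1 = (t' : ℕ)) :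
    (segGraph ends len).Adj (Sum.inr ⟨s, t⟩) (Sum.inr ⟨s, t'⟩) := by
  rw [segGraph, SimpleGraph.fromRel_adj]
  refine ⟨?_, Or.inl ⟨rfl, Or.inl ht⟩⟩
  intro h
  have : t = t' := by
    have := Sum.inr.inj h
    exact (Sigma.mk.inj_iff.mp this).2.eq
  omega

open SimpleGraph

lemma segGraph_walk_to_fst (s : Seg) :
    ∀ n (t : Fin (len s - 1)), (t : ℕ) = n →
    ∃ w : (segGraph ends len).Walk (Sum.inr ⟨s, t⟩) (Sum.inl (ends s).1), w.length = n + 1 := by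
  intro n
  induction n with
  | zero => intro t ht; exact ⟨(segGraph_adj_fst s t ht).toWalk, rfl⟩
  | succ k ih =>
    intro t ht
    have hk : k < len s - 1 := by have := t.isLt; omega
    obtain ⟨w, hw⟩ := ih ⟨k, hk⟩ rfl
    refine ⟨Walk.cons ((segGraph_adj_succ s ⟨k, hk⟩ t ?_).symm) w, by simp [hw]⟩
    simpa using ht.symm

lemma segGraph_walk_to_snd (s : Seg) :
    ∀ n (t : Fin (len s - 1)), (t : ℕ) + n + 2 = len s →
    ∃ w : (segGraph ends len).Walk (Sum.inr ⟨s, t⟩) (Sum.inl (ends s).2), w.length = n + 1 := by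
  intro n
  induction n with
  | zero =>
    intro t ht
    have h2 : (t : ℕ) + 2 = len s := by omega
    exact ⟨(segGraph_adj_snd s t h2).toWalk, by simp⟩
  | succ k ih =>
    intro t ht
    have hk : (t : ℕ) + 1 < len s - 1 := by omega
    obtain ⟨w, hw⟩ := ih ⟨(t : ℕ) + 1, hk⟩ (by simpa using by omega)
    exact ⟨Walk.cons (segGraph_adj_succ s t ⟨(t : ℕ) + 1, hk⟩ rfl) w, by simp [hw]⟩

/-- internal vertex to second endpoint, with length ≤ len s - 1 -/
lemma segGraph_walk_snd_le (s : Seg) (t : Fin (len s - 1)) :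
    ∃ w : (segGraph ends len).Walk (Sum.inr ⟨s, t⟩) (Sum.inl (ends s).2), w.length ≤ len s - 1 := by
  have ht := t.isLt
  obtain ⟨w, hw⟩ := segGraph_walk_to_snd s (len s - 2 - (t : ℕ)) t (by omega)
  exact ⟨w, by omega⟩

lemma segGraph_adj_ends (s : Seg) (h1 : len s = 1) (hne : (ends s).1 ≠ (ends s).2) :
    (segGraph ends len).Adj (Sum.inl (ends s).1) (Sum.inl (ends s).2) := by
  rw [segGraph, SimpleGraph.fromRel_adj]
  exact ⟨by simpa using hne, Or.inl ⟨s, h1, rfl⟩⟩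

lemma segGraph_walk_ends (s : Seg) (hlen : 1 ≤ len s) (hne : (ends s).1 ≠ (ends s).2) :
    ∃ w : (segGraph ends len).Walk (Sum.inl (ends s).1) (Sum.inl (ends s).2),
      w.length = len s := by
  rcases eq_or_lt_of_le hlen with h1 | h2
  · exact ⟨(segGraph_adj_ends s h1.symm hne).toWalk, by simp [← h1]⟩
  · have h0 : 0 < len s - 1 := by omega
    obtain ⟨w, hw⟩ := segGraph_walk_to_snd s (len s - 2) ⟨0, h0⟩ (by simp [Fin.val_mk]; omega)
    refine ⟨Walk.cons (segGraph_adj_fst s ⟨0, h0⟩ rfl).symm w, ?_⟩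
    simp [hw]; omega

end Generic

namespace StretchDiam

/-- Hub (distinguished) vertices of the stretched diameter graph `A_{k,P}`. -/
inductive Hub (m : ℕ) : Type
  | L : Fin (2 ^ m) → Hub m
  | L' : Fin (2 ^ m) → Hub m
  | R : Fin (2 ^ m) → Hub m
  | R' : Fin (2 ^ m) → Hub m
  | lk : Hub m
  | lk1 : Hub m
  | rk : Hub m
  | rk1 : Hub m
  | F : Fin m → Hub m
  | T : Fin m → Hub m
  | F' : Fin m → Hub m
  | T' : Fin m → Hub m

/-- Segments (paths between hubs) of `A_{k,P}`. -/
inductive Seg (m : ℕ) : Type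
  | Llk : Fin (2 ^ m) → Seg m            -- ℓ_i – ℓ_k, length P
  | Rrk : Fin (2 ^ m) → Seg m            -- r_i – r_k, length P
  | lklk1 : Seg m                        -- ℓ_k – ℓ_{k+1}, length P
  | rkrk1 : Seg m                        -- r_k – r_{k+1}, length P
  | lk1rk1 : Seg m                       -- edge ℓ_{k+1} – r_{k+1}
  | Lbit : Fin (2 ^ m) → Fin m → Seg m   -- ℓ_i – (f_j or t_j), length P
  | Rbit : Fin (2 ^ m) → Fin m → Seg m   -- r_i – (f'_j or t'_j), length P
  | FT' : Fin m → Seg m                  -- edge f_j – t'_j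
  | TF' : Fin m → Seg m                  -- edge t_j – f'_j
  | Flk1 : Fin m → Seg m                 -- f_j – ℓ_{k+1}, length P
  | Tlk1 : Fin m → Seg m                 -- t_j – ℓ_{k+1}, length P
  | F'rk1 : Fin m → Seg m                -- f'_j – r_{k+1}, length P
  | T'rk1 : Fin m → Seg m                -- t'_j – r_{k+1}, length P
  | L'L : Fin (2 ^ m) → Seg m            -- ℓ'_i – ℓ_i, length P
  | R'R : Fin (2 ^ m) → Seg m            -- r'_i – r_i, length P

open Hub Seg

/-- Endpoints of each segment. -/
def ends (m : ℕ) : Seg m → Hub m × Hub m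
  | Llk i => (L i, lk)
  | Rrk i => (R i, rk)
  | lklk1 => (lk, lk1)
  | rkrk1 => (rk, rk1)
  | lk1rk1 => (lk1, rk1)
  | Lbit i j => (L i, if Nat.testBit i.val j.val then T j else F j)
  | Rbit i j => (R i, if Nat.testBit i.val j.val then T' j else F' j)
  | FT' j => (F j, T' j)
  | TF' j => (T j, F' j)
  | Flk1 j => (F j, lk1)
  | Tlk1 j => (T j, lk1)
  | F'rk1 j => (F' j, rk1)
  | T'rk1 j => (T' j, rk1)
  | L'L i => (L' i, L i)
  | R'R i => (R' i, R i)

/-- Length of each segment: the three special edges have length 1, all other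
segments are paths of length `P`. -/
def len (m P : ℕ) : Seg m → ℕ
  | lk1rk1 => 1
  | FT' _ => 1
  | TF' _ => 1
  | _ => P

/-- Vertices of `A_{k,P}`: hubs together with internal path vertices. -/
abbrev V (m P : ℕ) : Type := Hub m ⊕ (s : Seg m) × Fin (len m P s - 1)

/-- The stretched diameter graph `A_{k,P}`. -/
def A (m P : ℕ) : SimpleGraph (V m P) := segGraph (ends m) (len m P)

/-- Membership in `L′ ∪ R′ ∪ ⋃_i Y(ℓ′_i, ℓ_i) ∪ ⋃_i Y(r′_i, r_i)`. -/
def excluded {m P : ℕ} : V m P → Prop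
  | Sum.inl (L' _) => True
  | Sum.inl (R' _) => True
  | Sum.inr ⟨L'L _, _⟩ => True
  | Sum.inr ⟨R'R _, _⟩ => True
  | _ => False

open SimpleGraph

variable {m P : ℕ}

lemma len_pos (hP : 1 ≤ P) (s : Seg m) : 1 ≤ len m P s := by
  cases s <;> first | exact hP | exact Nat.le_refl 1

lemma walk_seg (hP : 1 ≤ P) (s : Seg m) (hne : (ends m s).1 ≠ (ends m s).2) :
    ∃ w : (A m P).Walk (Sum.inl (ends m s).1) (Sum.inl (ends m s).2), w.length = len m P s :=
  segGraph_walk_ends s (len_pos hP s) hne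

lemma walk_lk_lk1 (hP : 1 ≤ P) :
    ∃ w : (A m P).Walk (Sum.inl lk) (Sum.inl lk1), w.length = P :=
  walk_seg hP lklk1 (by simp [ends])

lemma walk_rk_rk1 (hP : 1 ≤ P) :
    ∃ w : (A m P).Walk (Sum.inl rk) (Sum.inl rk1), w.length = P :=
  walk_seg hP rkrk1 (by simp [ends])

lemma walk_L_lk1 (hP : 1 ≤ P) (i : Fin (2 ^ m)) :
    ∃ w : (A m P).Walk (Sum.inl (L i)) (Sum.inl lk1), w.length = 2 * P := by
  obtain ⟨w1, h1⟩ : ∃ w : (A m P).Walk (Sum.inl (L i)) (Sum.inl lk), w.length = P :=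
    walk_seg (m := m) (P := P) hP (Llk i) (by simp [ends])
  obtain ⟨w2, h2⟩ := walk_lk_lk1 (m := m) hP
  exact ⟨w1.append w2, (Walk.length_append w1 w2).trans (by omega)⟩

lemma walk_R_rk1 (hP : 1 ≤ P) (i : Fin (2 ^ m)) :
    ∃ w : (A m P).Walk (Sum.inl (R i)) (Sum.inl rk1), w.length = 2 * P := by
  obtain ⟨w1, h1⟩ : ∃ w : (A m P).Walk (Sum.inl (R i)) (Sum.inl rk), w.length = P :=
    walk_seg (m := m) (P := P) hP (Rrk i) (by simp [ends])
  obtain ⟨w2, h2⟩ := walk_rk_rk1 (m := m) hP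
  exact ⟨w1.append w2, (Walk.length_append w1 w2).trans (by omega)⟩

lemma walk_F_lk1 (hP : 1 ≤ P) (j : Fin m) :
    ∃ w : (A m P).Walk (Sum.inl (F j)) (Sum.inl lk1), w.length = P :=
  walk_seg hP (Flk1 j) (by simp [ends])

lemma walk_T_lk1 (hP : 1 ≤ P) (j : Fin m) :
    ∃ w : (A m P).Walk (Sum.inl (T j)) (Sum.inl lk1), w.length = P :=
  walk_seg hP (Tlk1 j) (by simp [ends])

lemma walk_F'_rk1 (hP : 1 ≤ P) (j : Fin m) :
    ∃ w : (A m P).Walk (Sum.inl (F' j)) (Sum.inl rk1), w.length = P :=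
  walk_seg hP (F'rk1 j) (by simp [ends])

lemma walk_T'_rk1 (hP : 1 ≤ P) (j : Fin m) :
    ∃ w : (A m P).Walk (Sum.inl (T' j)) (Sum.inl rk1), w.length = P :=
  walk_seg hP (T'rk1 j) (by simp [ends])

lemma walk_bitL (hP : 1 ≤ P) (i : Fin (2 ^ m)) (j : Fin m) :
    ∃ w : (A m P).Walk (Sum.inl (ends m (Lbit i j)).2) (Sum.inl lk1), w.length = P := by
  by_cases hb : Nat.testBit i.val j.val
  · have h : (ends m (Lbit i j)).2 = T j := by simp [ends, hb]
    rw [h]; exact walk_T_lk1 hP j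
  · have h : (ends m (Lbit i j)).2 = F j := by simp [ends, hb]
    rw [h]; exact walk_F_lk1 hP j

lemma walk_bitR (hP : 1 ≤ P) (i : Fin (2 ^ m)) (j : Fin m) :
    ∃ w : (A m P).Walk (Sum.inl (ends m (Rbit i j)).2) (Sum.inl rk1), w.length = P := by
  by_cases hb : Nat.testBit i.val j.val
  · have h : (ends m (Rbit i j)).2 = T' j := by simp [ends, hb]
    rw [h]; exact walk_T'_rk1 hP j
  · have h : (ends m (Rbit i j)).2 = F' j := by simp [ends, hb]
    rw [h]; exact walk_F'_rk1 hP j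

lemma near (hP : 1 ≤ P) (u : V m P) (hu : ¬ excluded u) :
    (∃ w : (A m P).Walk u (Sum.inl lk1), w.length ≤ 2 * P) ∨
    (∃ w : (A m P).Walk u (Sum.inl rk1), w.length ≤ 2 * P) := by
  rcases u with h | ⟨s, t⟩
  · cases h with
    | L i => obtain ⟨w, hw⟩ := walk_L_lk1 (m := m) hP i; exact Or.inl ⟨w, hw.le⟩
    | L' i => exact absurd trivial hu
    | R i => obtain ⟨w, hw⟩ := walk_R_rk1 (m := m) hP i; exact Or.inr ⟨w, hw.le⟩
    | R' i => exact absurd trivial hu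
    | lk => obtain ⟨w, hw⟩ := walk_lk_lk1 (m := m) (P := P) hP; exact Or.inl ⟨w, by omega⟩
    | lk1 => exact Or.inl ⟨Walk.nil, by simp⟩
    | rk => obtain ⟨w, hw⟩ := walk_rk_rk1 (m := m) (P := P) hP; exact Or.inr ⟨w, by omega⟩
    | rk1 => exact Or.inr ⟨Walk.nil, by simp⟩
    | F j => obtain ⟨w, hw⟩ := walk_F_lk1 (m := m) hP j; exact Or.inl ⟨w, by omega⟩
    | T j => obtain ⟨w, hw⟩ := walk_T_lk1 (m := m) hP j; exact Or.inl ⟨w, by omega⟩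
    | F' j => obtain ⟨w, hw⟩ := walk_F'_rk1 (m := m) hP j; exact Or.inr ⟨w, by omega⟩
    | T' j => obtain ⟨w, hw⟩ := walk_T'_rk1 (m := m) hP j; exact Or.inr ⟨w, by omega⟩
  · cases s with
    | Llk i =>
      obtain ⟨w1, h1⟩ : ∃ w : (A m P).Walk (Sum.inr ⟨Llk i, t⟩) (Sum.inl lk), w.length ≤ P - 1 :=
        segGraph_walk_snd_le (Llk i) t
      obtain ⟨w2, h2⟩ := walk_lk_lk1 (m := m) (P := P) hP
      exact Or.inl ⟨w1.append w2, (Walk.length_append w1 w2).le.trans (by omega)⟩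
    | Rrk i =>
      obtain ⟨w1, h1⟩ : ∃ w : (A m P).Walk (Sum.inr ⟨Rrk i, t⟩) (Sum.inl rk), w.length ≤ P - 1 :=
        segGraph_walk_snd_le (Rrk i) t
      obtain ⟨w2, h2⟩ := walk_rk_rk1 (m := m) (P := P) hP
      exact Or.inr ⟨w1.append w2, (Walk.length_append w1 w2).le.trans (by omega)⟩
    | lklk1 =>
      obtain ⟨w1, h1⟩ := segGraph_walk_snd_le lklk1 t
      exact Or.inl ⟨w1, le_trans h1 (by simp only [len]; omega)⟩
    | rkrk1 =>
      obtain ⟨w1, h1⟩ := segGraph_walk_snd_le rkrk1 t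
      exact Or.inr ⟨w1, le_trans h1 (by simp only [len]; omega)⟩
    | lk1rk1 => exact t.elim0
    | Lbit i j =>
      obtain ⟨w1, h1⟩ : ∃ w : (A m P).Walk (Sum.inr ⟨Lbit i j, t⟩) (Sum.inl (ends m (Lbit i j)).2), w.length ≤ P - 1 :=
        segGraph_walk_snd_le (Lbit i j) t
      obtain ⟨w2, h2⟩ := walk_bitL hP i j
      exact Or.inl ⟨w1.append w2, (Walk.length_append w1 w2).le.trans (by omega)⟩
    | Rbit i j =>
      obtain ⟨w1, h1⟩ : ∃ w : (A m P).Walk (Sum.inr ⟨Rbit i j, t⟩) (Sum.inl (ends m (Rbit i j)).2), w.length ≤ P - 1 :=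
        segGraph_walk_snd_le (Rbit i j) t
      obtain ⟨w2, h2⟩ := walk_bitR hP i j
      exact Or.inr ⟨w1.append w2, (Walk.length_append w1 w2).le.trans (by omega)⟩
    | FT' j => exact t.elim0
    | TF' j => exact t.elim0
    | Flk1 j =>
      obtain ⟨w1, h1⟩ := segGraph_walk_snd_le (Flk1 j) t
      exact Or.inl ⟨w1, le_trans h1 (by simp only [len]; omega)⟩
    | Tlk1 j =>
      obtain ⟨w1, h1⟩ := segGraph_walk_snd_le (Tlk1 j) t
      exact Or.inl ⟨w1, le_trans h1 (by simp only [len]; omega)⟩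
    | F'rk1 j =>
      obtain ⟨w1, h1⟩ := segGraph_walk_snd_le (F'rk1 j) t
      exact Or.inr ⟨w1, le_trans h1 (by simp only [len]; omega)⟩
    | T'rk1 j =>
      obtain ⟨w1, h1⟩ := segGraph_walk_snd_le (T'rk1 j) t
      exact Or.inr ⟨w1, le_trans h1 (by simp only [len]; omega)⟩
    | L'L i => exact absurd trivial hu
    | R'R i => exact absurd trivial hu

theorem statement5 (m P : ℕ) (hm : 1 ≤ m) (hP : 1 ≤ P) :
    ∀ u v : V m P, ¬ excluded u → ¬ excluded v → (A m P).dist u v ≤ 4 * P + 1 := by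
  intro u v hu hv
  have e : (A m P).Adj (Sum.inl lk1) (Sum.inl rk1) :=
    segGraph_adj_ends lk1rk1 rfl (by simp [ends])
  obtain ⟨w1, l1⟩ | ⟨w1, l1⟩ := near hP u hu <;>
    obtain ⟨w2, l2⟩ | ⟨w2, l2⟩ := near hP v hv
  · exact le_trans (SimpleGraph.dist_le (w1.append w2.reverse)) (by simp; omega)
  · exact le_trans (SimpleGraph.dist_le (w1.append (Walk.cons e w2.reverse))) (by simp; omega)
  · exact le_trans (SimpleGraph.dist_le (w1.append (Walk.cons e.symm w2.reverse))) (by simp; omega)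
  · exact le_trans (SimpleGraph.dist_le (w1.append w2.reverse)) (by simp; omega)

end StretchDiam
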